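/- The Klauder coherent product on ℂ × V, K([z₀,z],[z₀',z']) := exp(conj(z₀) + z₀' + ⟪z, z'⟫), is of positive type: for any finite collection of points, the Gram matrix is Hermitian positive semidefinite. -/

import Mathlib

open scoped ComplexOrder

open Matrix Finset Nat

private lemma gram_posSemidef {V : Type*} [NormedAddCommGroup V]
    [InnerProductSpace ℂ V] {n : ℕ} (v : Fin n → V) :
    (Matrix.of fun j k => (inner ℂ (v j) (v k) : ℂ) :
      Matrix (Fin n) (Fin n) ℂ).PosSemidef := by
  rw [Matrix.posSemidef_iff_dotProduct_mulVec]
  constructor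
  · ext j k
    simp [Matrix.conjTranspose_apply, inner_conj_symm]
  · intro x
    have h : star x ⬝ᵥ (Matrix.of fun j k => (inner ℂ (v j) (v k) : ℂ)) *ᵥ x
        = (inner ℂ (∑ j, x j • v j) (∑ k, x k • v k) : ℂ) := by
      simp only [dotProduct, Matrix.mulVec, dotProduct, Matrix.of_apply,
        sum_inner, inner_sum, inner_smul_left, inner_smul_right, Pi.star_apply,
        RCLike.star_def, Finset.mul_sum]
      conv_lhs => rw [Finset.sum_comm]
      refine Finset.sum_congr rfl fun j _ => Finset.sum_congr rfl fun k _ => ?_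
      ring
    rw [h, @inner_self_eq_norm_sq_to_K ℂ]
    norm_num

private lemma schur_product_posSemidef {n : ℕ} {A B : Matrix (Fin n) (Fin n) ℂ}
    (hA : A.PosSemidef) (hB : B.PosSemidef) :
    (Matrix.of fun j k => A j k * B j k : Matrix (Fin n) (Fin n) ℂ).PosSemidef := by
  exact hA.hadamard hB

private lemma hadamard_pow_posSemidef {n : ℕ} {A : Matrix (Fin n) (Fin n) ℂ}
    (hA : A.PosSemidef) (m : ℕ) :
    (Matrix.of fun j k => A j k ^ m : Matrix (Fin n) (Fin n) ℂ).PosSemidef := by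
  induction m with
  | zero =>
    have : (Matrix.of fun j k => A j k ^ 0 : Matrix (Fin n) (Fin n) ℂ)
        = (Matrix.of fun _ _ => (1 : ℂ) : Matrix (Fin 1) (Fin n) ℂ)ᴴ
          * (Matrix.of fun _ _ => (1 : ℂ) : Matrix (Fin 1) (Fin n) ℂ) := by
      ext j k
      simp [Matrix.mul_apply, Matrix.conjTranspose_apply]
    rw [this]
    exact Matrix.posSemidef_conjTranspose_mul_self _
  | succ m ih =>
    have : (Matrix.of fun j k => A j k ^ (m + 1) : Matrix (Fin n) (Fin n) ℂ)
        = Matrix.of fun j k =>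
            (Matrix.of fun j k => A j k ^ m : Matrix (Fin n) (Fin n) ℂ) j k * A j k := by
      ext j k; simp [pow_succ]
    rw [this]
    exact schur_product_posSemidef ih hA

private lemma exp_posSemidef {n : ℕ} {A : Matrix (Fin n) (Fin n) ℂ}
    (hA : A.PosSemidef) :
    (Matrix.of fun j k => Complex.exp (A j k) : Matrix (Fin n) (Fin n) ℂ).PosSemidef := by
  have hexp : ∀ z : ℂ, Complex.exp z = ∑' m : ℕ, z ^ m / m ! := by
    intro z
    rw [Complex.exp_eq_exp_ℂ, NormedSpace.exp_eq_tsum_div]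
  rw [Matrix.posSemidef_iff_dotProduct_mulVec]
  constructor
  · ext j k
    have h1 : (starRingEnd ℂ) (A k j) = A j k := by
      have := congrFun (congrFun hA.1 j) k
      simpa [Matrix.conjTranspose_apply] using this
    simp [Matrix.conjTranspose_apply, ← Complex.exp_conj, h1]
  · intro x
    have hsum : ∀ j k : Fin n, Summable fun m : ℕ =>
        star (x j) * (A j k ^ m / m ! * x k) := fun j k =>
      (((NormedSpace.expSeries_div_summable (A j k)).mul_right (x k)).mul_left
        (star (x j)))
    have hform : star x ⬝ᵥ (Matrix.of fun j k => Complex.exp (A j k)) *ᵥ x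
        = ∑' m : ℕ, ∑ j, ∑ k,
            ((m ! : ℂ))⁻¹ * (star (x j) * (A j k ^ m * x k)) := by
      simp only [dotProduct, Matrix.mulVec, dotProduct, Matrix.of_apply, Pi.star_apply,
        Finset.mul_sum, hexp]
      have step1 : ∀ j k : Fin n, star (x j) * ((∑' m : ℕ, A j k ^ m / m !) * x k)
          = ∑' m : ℕ, star (x j) * (A j k ^ m / m ! * x k) := by
        intro j k
        rw [← tsum_mul_right, ← tsum_mul_left]
      have step2 : ∀ j : Fin n, ∑ k, ∑' m : ℕ, star (x j) * (A j k ^ m / m ! * x k)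
          = ∑' m : ℕ, ∑ k, star (x j) * (A j k ^ m / m ! * x k) := fun j =>
        (Summable.tsum_finsetSum fun k _ => hsum j k).symm
      calc ∑ j, ∑ k, star (x j) * ((∑' m : ℕ, A j k ^ m / m !) * x k)
          = ∑ j, ∑' m : ℕ, ∑ k, star (x j) * (A j k ^ m / m ! * x k) := by
            simp only [step1, step2]
        _ = ∑' m : ℕ, ∑ j, ∑ k, star (x j) * (A j k ^ m / m ! * x k) :=
            (Summable.tsum_finsetSum fun j _ => summable_sum fun k _ => hsum j k).symm
        _ = ∑' m : ℕ, ∑ j, ∑ k, ((m ! : ℂ))⁻¹ * (star (x j) * (A j k ^ m * x k)) := by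
            refine tsum_congr fun m => Finset.sum_congr rfl fun j _ =>
              Finset.sum_congr rfl fun k _ => ?_
            rw [div_eq_mul_inv]
            ring
    have hquad : ∀ m : ℕ, ∑ j, ∑ k, star (x j) * (A j k ^ m * x k)
        = star x ⬝ᵥ (Matrix.of fun j k => A j k ^ m : Matrix (Fin n) (Fin n) ℂ) *ᵥ x := by
      intro m
      simp [dotProduct, Matrix.mulVec, Finset.mul_sum]
    rw [hform]
    refine tsum_nonneg fun m => ?_
    simp only [← Finset.mul_sum]
    have h3 : (∑ i, star (x i) * ∑ k, A i k ^ m * x k)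
        = star x ⬝ᵥ (Matrix.of fun j k => A j k ^ m : Matrix (Fin n) (Fin n) ℂ) *ᵥ x := by
      simp [dotProduct, Matrix.mulVec]
    rw [h3]
    refine mul_nonneg ?_ ((hadamard_pow_posSemidef hA m).dotProduct_mulVec_nonneg x)
    have h2 : ((m ! : ℂ))⁻¹ = Complex.ofReal ((m ! : ℝ))⁻¹ := by simp
    rw [h2]
    exact Complex.zero_le_real.mpr (inv_nonneg.mpr (Nat.cast_nonneg _))

/-- The Klauder coherent product `K([z₀,z],[z₀',z']) = exp(conj z₀ + z₀' + ⟪z,z'⟫)`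
on `ℂ × V` is of positive type. -/
theorem klauder_kernel_posSemidef {V : Type*} [NormedAddCommGroup V]
    [InnerProductSpace ℂ V] (n : ℕ) (w : Fin n → ℂ × V) :
    (Matrix.of fun j k =>
        Complex.exp (starRingEnd ℂ (w j).1 + (w k).1 +
          (inner ℂ (w j).2 (w k).2 : ℂ)) :
      Matrix (Fin n) (Fin n) ℂ).PosSemidef := by
  have hE := exp_posSemidef (gram_posSemidef (fun j => (w j).2))
  set D : Matrix (Fin n) (Fin n) ℂ := Matrix.diagonal (fun j => Complex.exp ((w j).1))
    with hD
  have key : (Matrix.of fun j k =>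
        Complex.exp (starRingEnd ℂ (w j).1 + (w k).1 +
          (inner ℂ (w j).2 (w k).2 : ℂ)) :
      Matrix (Fin n) (Fin n) ℂ)
      = Dᴴ * (Matrix.of fun j k =>
          Complex.exp ((inner ℂ (w j).2 (w k).2 : ℂ))) * D := by
    ext j k
    simp only [hD, Matrix.diagonal_conjTranspose, Matrix.mul_diagonal,
      Matrix.diagonal_mul, Matrix.of_apply, Pi.star_apply, RCLike.star_def,
      ← Complex.exp_conj, Complex.exp_add]
    ring
  rw [key]
  exact hE.conjTranspose_mul_mul_same D
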